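/- Let Λ be a measure on (0,∞) with Λ([x,∞)) < ∞ for every x > 0 and ∫_{(0,∞)} x² dΛ(x) < ∞, and define Λ⁻¹(u) = inf{x > 0 : Λ([x,∞)) < u} for u > 0. Let (Eᵢ)_{i∈ℕ} be i.i.d. exponential random variables with rate 1 and set Γ_n = E₁ + ⋯ + E_n (the arrival times of a standard Poisson process). Then Σ_{n=1}^∞ (Λ⁻¹(Γ_n))² < ∞ almost surely. -/

import Mathlib

open MeasureTheory ProbabilityTheory Set Finset
open Filter
open scoped ENNReal Topology

/-- The generalized inverse of the tail of a measure `Λ` on `(0, ∞)`: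
`Λ⁻¹(u) = inf {x > 0 : Λ([x, ∞)) < u}`. -/
noncomputable def levyTailInv (Λ : Measure ℝ) (u : ℝ) : ℝ :=
  sInf {x : ℝ | 0 < x ∧ Λ (Set.Ici x) < ENNReal.ofReal u}

lemma levyTailInv_nonneg (Λ : Measure ℝ) (u : ℝ) : 0 ≤ levyTailInv Λ u :=
  Real.sInf_nonneg fun _ hx => hx.1.le

lemma levyTailInv_set_nonempty (Λ : Measure ℝ) (htail : ∀ x : ℝ, 0 < x → Λ (Set.Ici x) < ⊤)
    {u : ℝ} (hu : 0 < u) :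
    {x : ℝ | 0 < x ∧ Λ (Set.Ici x) < ENNReal.ofReal u}.Nonempty := by
  have hmeas : ∀ n : ℕ, NullMeasurableSet (Set.Ici ((n : ℝ) + 1)) Λ :=
    fun n => measurableSet_Ici.nullMeasurableSet
  have hanti : Antitone (fun n : ℕ => Set.Ici ((n : ℝ) + 1)) := by
    intro m n hmn
    have : (m : ℝ) ≤ (n : ℝ) := Nat.cast_le.mpr hmn
    exact Set.Ici_subset_Ici.mpr (by linarith)
  have hfin : ∃ n : ℕ, Λ (Set.Ici ((n : ℝ) + 1)) ≠ ⊤ := ⟨0, (htail _ (by norm_num)).ne⟩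
  have hempty : ⋂ n : ℕ, Set.Ici ((n : ℝ) + 1) = ∅ := by
    ext x
    simp only [Set.mem_iInter, Set.mem_Ici, Set.mem_empty_iff_false, iff_false, not_forall, not_le]
    obtain ⟨n, hn⟩ := exists_nat_gt x
    exact ⟨n, by linarith⟩
  have h := tendsto_measure_iInter_atTop hmeas hanti hfin
  rw [hempty, measure_empty] at h
  have h2 : ∀ᶠ n : ℕ in atTop, Λ (Set.Ici ((n : ℝ) + 1)) < ENNReal.ofReal u := by
    have hpos : (0:ℝ≥0∞) < ENNReal.ofReal u := by simpa using hu
    exact h.eventually (eventually_lt_nhds hpos)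
  obtain ⟨n, hn⟩ := h2.exists
  exact ⟨(n : ℝ) + 1, by positivity, hn⟩

lemma levyTailInv_le (Λ : Measure ℝ) (htail : ∀ x : ℝ, 0 < x → Λ (Set.Ici x) < ⊤)
    {u v : ℝ} (hu : 0 < u) (huv : u ≤ v) : levyTailInv Λ v ≤ levyTailInv Λ u :=
  csInf_le_csInf ⟨0, fun _ hx => hx.1.le⟩ (levyTailInv_set_nonempty Λ htail hu)
    (fun x hx => ⟨hx.1, hx.2.trans_le (ENNReal.ofReal_le_ofReal huv)⟩)

lemma le_measure_of_lt_levyTailInv (Λ : Measure ℝ) {u t : ℝ} (ht : 0 < t)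
    (h : t < levyTailInv Λ u) : ENNReal.ofReal u ≤ Λ (Set.Ici t) := by
  by_contra hc
  push_neg at hc
  have hbdd : BddBelow {x : ℝ | 0 < x ∧ Λ (Set.Ici x) < ENNReal.ofReal u} :=
    ⟨0, fun _ hx => hx.1.le⟩
  exact absurd (csInf_le hbdd ⟨ht, hc⟩) (not_le.mpr h)

lemma aemeasurable_levyTailInv (Λ : Measure ℝ) (htail : ∀ x : ℝ, 0 < x → Λ (Set.Ici x) < ⊤) :
    AEMeasurable (levyTailInv Λ) (volume.restrict (Set.Ioi (0:ℝ))) := by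
  apply aemeasurable_restrict_of_antitoneOn measurableSet_Ioi
  intro u hu v _ huv
  exact levyTailInv_le Λ htail hu huv

lemma lintegral_levyTailInv_sq_le (Λ : Measure ℝ) (htail : ∀ x : ℝ, 0 < x → Λ (Set.Ici x) < ⊤) :
    ∫⁻ u in Set.Ioi (0:ℝ), ENNReal.ofReal ((levyTailInv Λ u) ^ 2)
      ≤ ∫⁻ x in Set.Ioi (0:ℝ), ENNReal.ofReal (x ^ 2) ∂Λ := by
  set f := levyTailInv Λ with hf
  have f_mble : AEMeasurable (fun u => (f u) ^ 2) (volume.restrict (Set.Ioi (0:ℝ))) :=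
    (aemeasurable_levyTailInv Λ htail).pow_const 2
  rw [lintegral_eq_lintegral_meas_lt _ (Eventually.of_forall fun u => sq_nonneg (f u)) f_mble,
    lintegral_eq_lintegral_meas_le _ (Eventually.of_forall fun x => sq_nonneg x)
      (measurable_id.pow_const 2).aemeasurable]
  apply lintegral_mono_ae
  filter_upwards [ae_restrict_mem measurableSet_Ioi] with s hs
  have hs' : (0:ℝ) < s := hs
  have hsqrt : 0 < Real.sqrt s := Real.sqrt_pos.mpr hs'
  calc (volume.restrict (Set.Ioi (0:ℝ))) {u | s < f u ^ 2}
      = volume ({u | s < f u ^ 2} ∩ Set.Ioi 0) := Measure.restrict_apply' measurableSet_Ioi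
    _ ≤ volume (Set.Ioc 0 ((Λ (Set.Ici (Real.sqrt s))).toReal)) := by
        apply measure_mono
        rintro u ⟨hu1, hu2⟩
        have hu2' : (0:ℝ) < u := hu2
        have hfu : 0 < f u := by
          rcases (levyTailInv_nonneg Λ u).lt_or_eq with h | h
          · exact h
          · exfalso
            have h1 : s < f u ^ 2 := hu1
            rw [hf] at h1
            rw [← h] at h1
            simp only [ne_eq, OfNat.ofNat_ne_zero, not_false_eq_true, zero_pow] at h1
            linarith
        have hlt : Real.sqrt s < f u := (Real.sqrt_lt' hfu).mpr hu1
        have hle := le_measure_of_lt_levyTailInv Λ hsqrt hlt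
        have hfin : Λ (Set.Ici (Real.sqrt s)) ≠ ⊤ := (htail _ hsqrt).ne
        exact ⟨hu2', (ENNReal.ofReal_le_iff_le_toReal hfin).mp hle⟩
    _ = Λ (Set.Ici (Real.sqrt s)) := by
        rw [Real.volume_Ioc, sub_zero, ENNReal.ofReal_toReal (htail _ hsqrt).ne]
    _ ≤ (Λ.restrict (Set.Ioi (0:ℝ))) {x | s ≤ x ^ 2} := by
        rw [Measure.restrict_apply' measurableSet_Ioi]
        apply measure_mono
        intro x hx
        have hx' : Real.sqrt s ≤ x := hx
        refine ⟨?_, lt_of_lt_of_le hsqrt hx'⟩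
        have : Real.sqrt s ^ 2 ≤ x ^ 2 := pow_le_pow_left₀ hsqrt.le hx' 2
        rwa [Real.sq_sqrt hs'.le] at this

lemma summable_levyTailInv_sq_arith (Λ : Measure ℝ)
    (htail : ∀ x : ℝ, 0 < x → Λ (Set.Ici x) < ⊤)
    (hmom : ∫⁻ x in Set.Ioi (0:ℝ), ENNReal.ofReal (x ^ 2) ∂Λ ≠ ⊤) {c : ℝ} (hc : 0 < c) :
    Summable fun n : ℕ => (levyTailInv Λ (((n : ℝ) + 1) * c)) ^ 2 := by
  set f := levyTailInv Λ with hf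
  set I := ∫⁻ u in Set.Ioi (0:ℝ), ENNReal.ofReal ((f u) ^ 2) with hI_def
  have hI : I ≠ ⊤ := ((lintegral_levyTailInv_sq_le Λ htail).trans_lt
    (lt_top_iff_ne_top.mpr hmom)).ne
  have termbound : ∀ n : ℕ,
      ENNReal.ofReal ((f (((n : ℝ) + 1) * c)) ^ 2) * ENNReal.ofReal c
        ≤ ∫⁻ s in Set.Ioc ((n : ℝ) * c) (((n : ℝ) + 1) * c), ENNReal.ofReal ((f s) ^ 2) := by
    intro n
    have hvol : volume (Set.Ioc ((n : ℝ) * c) (((n : ℝ) + 1) * c)) = ENNReal.ofReal c := by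
      rw [Real.volume_Ioc]; ring_nf
    calc ENNReal.ofReal ((f (((n : ℝ) + 1) * c)) ^ 2) * ENNReal.ofReal c
        = ∫⁻ _ in Set.Ioc ((n : ℝ) * c) (((n : ℝ) + 1) * c),
            ENNReal.ofReal ((f (((n : ℝ) + 1) * c)) ^ 2) := by rw [setLIntegral_const, hvol]
      _ ≤ _ := by
          apply lintegral_mono_ae
          filter_upwards [ae_restrict_mem measurableSet_Ioc] with s hs
          have hs0 : 0 < s := lt_of_le_of_lt (by positivity) hs.1
          have hmono : f (((n : ℝ) + 1) * c) ≤ f s := levyTailInv_le Λ htail hs0 hs.2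
          exact ENNReal.ofReal_le_ofReal
            (pow_le_pow_left₀ (levyTailInv_nonneg Λ _) hmono 2)
  have hsplit : ∀ N : ℕ,
      ∑ n ∈ Finset.range N, ∫⁻ s in Set.Ioc ((n : ℝ) * c) (((n : ℝ) + 1) * c),
        ENNReal.ofReal ((f s) ^ 2)
      = ∫⁻ s in Set.Ioc (0 : ℝ) ((N : ℝ) * c), ENNReal.ofReal ((f s) ^ 2) := by
    intro N
    induction N with
    | zero => simp
    | succ N ih =>
        rw [Finset.sum_range_succ, ih]
        have hunion : Set.Ioc (0:ℝ) ((N : ℝ) * c) ∪ Set.Ioc ((N : ℝ) * c) (((N : ℝ) + 1) * c)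
            = Set.Ioc (0:ℝ) ((((N : ℕ) + 1 : ℕ) : ℝ) * c) := by
          rw [Set.Ioc_union_Ioc_eq_Ioc (by positivity) (by nlinarith)]
          push_cast; ring_nf
        rw [← hunion, lintegral_union measurableSet_Ioc (Set.Ioc_disjoint_Ioc_of_le le_rfl)]
  have key : ∀ N : ℕ,
      ∑ n ∈ Finset.range N, ENNReal.ofReal ((f (((n : ℝ) + 1) * c)) ^ 2) * ENNReal.ofReal c
        ≤ I := by
    intro N
    calc ∑ n ∈ Finset.range N, ENNReal.ofReal ((f (((n : ℝ) + 1) * c)) ^ 2) * ENNReal.ofReal c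
        ≤ ∑ n ∈ Finset.range N, ∫⁻ s in Set.Ioc ((n : ℝ) * c) (((n : ℝ) + 1) * c),
            ENNReal.ofReal ((f s) ^ 2) := Finset.sum_le_sum fun n _ => termbound n
      _ = ∫⁻ s in Set.Ioc (0 : ℝ) ((N : ℝ) * c), ENNReal.ofReal ((f s) ^ 2) := hsplit N
      _ ≤ I := lintegral_mono_set Set.Ioc_subset_Ioi_self
  have htsum : (∑' n : ℕ, ENNReal.ofReal ((f (((n : ℝ) + 1) * c)) ^ 2)) * ENNReal.ofReal c
      ≤ I := by
    rw [← ENNReal.tsum_mul_right, ENNReal.tsum_eq_iSup_nat]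
    exact iSup_le key
  have htop : (∑' n : ℕ, ENNReal.ofReal ((f (((n : ℝ) + 1) * c)) ^ 2)) ≠ ⊤ := by
    intro h'
    rw [h', ENNReal.top_mul (by simpa [ENNReal.ofReal_eq_zero] using hc.not_ge)] at htsum
    exact hI (top_le_iff.mp htsum)
  exact (ENNReal.summable_toReal htop).congr
    fun n => ENNReal.toReal_ofReal (sq_nonneg _)

lemma gammaPDFReal_one_one (x : ℝ) :
    gammaPDFReal 1 1 x = if 0 ≤ x then Real.exp (-x) else 0 := by
  unfold gammaPDFReal
  split_ifs with h
  · simp [Real.Gamma_one, Real.rpow_zero, Real.one_rpow]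
  · rfl

lemma integrableOn_exp_neg_mul_id :
    MeasureTheory.IntegrableOn (fun x : ℝ => Real.exp (-x) * x) (Set.Ioi 0) volume := by
  have h := Real.GammaIntegral_convergent (show (0:ℝ) < 2 by norm_num)
  have : (fun x : ℝ => Real.exp (-x) * x ^ ((2:ℝ) - 1)) = fun x : ℝ => Real.exp (-x) * x := by
    funext x
    norm_num
  rwa [this] at h

lemma integral_exp_neg_mul_id :
    ∫ x in Set.Ioi (0:ℝ), Real.exp (-x) * x = 1 := by
  have h := (Real.Gamma_eq_integral (show (0:ℝ) < 2 by norm_num)).symm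
  have h2 : Real.Gamma 2 = 1 := by
    rw [show (2:ℝ) = 1 + 1 by norm_num, Real.Gamma_add_one one_ne_zero, Real.Gamma_one, mul_one]
  have : (fun x : ℝ => Real.exp (-x) * x ^ ((2:ℝ) - 1)) = fun x : ℝ => Real.exp (-x) * x := by
    funext x
    norm_num
  rw [this] at h
  rw [h, h2]

lemma measurable_gammaPDF_one_one : Measurable (gammaPDF 1 1) :=
  (measurable_gammaPDFReal 1 1).ennreal_ofReal

lemma integrable_id_expMeasure : Integrable (fun x : ℝ => x) (expMeasure 1) := by
  rw [expMeasure, gammaMeasure]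
  rw [integrable_withDensity_iff measurable_gammaPDF_one_one
    (Eventually.of_forall fun x => ENNReal.ofReal_lt_top)]
  have heq : (fun x : ℝ => x * (gammaPDF 1 1 x).toReal)
      = Set.indicator (Set.Ici (0:ℝ)) (fun x => x * Real.exp (-x)) := by
    funext x
    rw [gammaPDF, ENNReal.toReal_ofReal (gammaPDFReal_nonneg one_pos one_pos x),
      gammaPDFReal_one_one]
    by_cases h : 0 ≤ x <;> simp [h, Set.indicator_of_mem, Set.indicator_of_notMem]
  rw [heq, integrable_indicator_iff measurableSet_Ici,
    integrableOn_Ici_iff_integrableOn_Ioi]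
  exact integrableOn_exp_neg_mul_id.congr_fun (fun x _ => mul_comm _ _) measurableSet_Ioi

lemma integral_id_expMeasure : ∫ x, x ∂(expMeasure 1) = 1 := by
  have hnn : ∀ᵐ x ∂(expMeasure 1), (0:ℝ) ≤ x := by
    rw [ae_iff]
    have hset : {x : ℝ | ¬ (0:ℝ) ≤ x} = Set.Iio 0 := by
      ext x; simp [not_le]
    rw [hset, expMeasure, gammaMeasure, withDensity_apply _ measurableSet_Iio]
    rw [setLIntegral_congr_fun_ae measurableSet_Iio
      (Eventually.of_forall fun x (hx : x ∈ Set.Iio 0) => gammaPDF_of_neg hx)]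
    simp
  rw [integral_eq_lintegral_of_nonneg_ae hnn
    (aestronglyMeasurable_id)]
  rw [expMeasure, gammaMeasure,
    lintegral_withDensity_eq_lintegral_mul volume
      measurable_gammaPDF_one_one ENNReal.measurable_ofReal]
  have hsplit := (lintegral_add_compl (μ := volume)
    (fun x => (gammaPDF 1 1 * fun a => ENNReal.ofReal a) x) (measurableSet_Ioi (a := (0:ℝ))))
  rw [← hsplit]
  have h1 : ∫⁻ x in (Set.Ioi (0:ℝ))ᶜ, (gammaPDF 1 1 * fun a => ENNReal.ofReal a) x = 0 := by
    rw [Set.compl_Ioi]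
    have heq : ∀ᵐ x ∂(volume.restrict (Set.Iic (0:ℝ))),
        (gammaPDF 1 1 * fun a => ENNReal.ofReal a) x = 0 := by
      filter_upwards [ae_restrict_mem measurableSet_Iic] with x hx
      have hx0 : x ≤ 0 := hx
      rcases lt_or_eq_of_le hx0 with h | h
      · simp [Pi.mul_apply, gammaPDF_of_neg h]
      · simp [Pi.mul_apply, h]
    rw [lintegral_congr_ae heq, lintegral_zero]
  have h2 : ∫⁻ x in Set.Ioi (0:ℝ), (gammaPDF 1 1 * fun a => ENNReal.ofReal a) x
      = ENNReal.ofReal 1 := by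
    have heq : ∀ᵐ x ∂(volume.restrict (Set.Ioi (0:ℝ))),
        (gammaPDF 1 1 * fun a => ENNReal.ofReal a) x
          = ENNReal.ofReal (Real.exp (-x) * x) := by
      filter_upwards [ae_restrict_mem measurableSet_Ioi] with x hx
      have hx' : (0:ℝ) < x := hx
      simp only [Pi.mul_apply, gammaPDF, gammaPDFReal_one_one, if_pos hx'.le]
      rw [← ENNReal.ofReal_mul (Real.exp_nonneg _)]
    rw [lintegral_congr_ae heq,
      ← ofReal_integral_eq_lintegral_ofReal integrableOn_exp_neg_mul_id ?_,
      integral_exp_neg_mul_id]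
    filter_upwards [ae_restrict_mem measurableSet_Ioi] with x hx
    have hx' : (0:ℝ) < x := hx
    positivity
  rw [h1, h2, add_zero, ENNReal.toReal_ofReal zero_le_one]

/-- If `Λ` is a measure on `(0, ∞)` with finite tails and a finite second moment, and
`Γ_n = E₁ + ⋯ + E_n` are arrival times of a standard Poisson process (the `Eᵢ` being
i.i.d. rate-one exponentials), then `∑_n (Λ⁻¹(Γ_n))² < ∞` almost surely. -/
theorem summable_sq_levyTailInv_of_poisson_arrivals
    {Ω : Type*} [MeasurableSpace Ω] (P : Measure Ω) [IsProbabilityMeasure P]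
    (Λ : Measure ℝ) (hsupp : Λ (Set.Iic 0) = 0)
    (htail : ∀ x : ℝ, 0 < x → Λ (Set.Ici x) < ⊤)
    (hmom : ∫⁻ x in Set.Ioi (0:ℝ), ENNReal.ofReal (x ^ 2) ∂Λ ≠ ⊤)
    (E : ℕ → Ω → ℝ) (hEmeas : ∀ i, Measurable (E i))
    (hElaw : ∀ i, Measure.map (E i) P = expMeasure 1)
    (hEindep : iIndepFun E P) :
    ∀ᵐ ω ∂P,
      Summable fun n : ℕ =>
        (levyTailInv Λ (∑ i ∈ Finset.range (n + 1), E i ω)) ^ 2 := by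
  have hint : Integrable (E 0) P := by
    have h := integrable_id_expMeasure
    rw [← hElaw 0] at h
    rw [integrable_map_measure (show AEStronglyMeasurable (fun x : ℝ => x)
      (Measure.map (E 0) P) from aestronglyMeasurable_id) (hEmeas 0).aemeasurable] at h
    exact h
  have hident : ∀ i, IdentDistrib (E i) (E 0) P P := fun i =>
    ⟨(hEmeas i).aemeasurable, (hEmeas 0).aemeasurable, by rw [hElaw i, hElaw 0]⟩
  have hpind : Pairwise (Function.onFun (IndepFun · · P) E) := fun i j hij => hEindep.indepFun hij
  have hmean : P[E 0] = 1 := by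
    have h := integral_map (φ := E 0) (μ := P) (f := fun x : ℝ => x)
      (hEmeas 0).aemeasurable aestronglyMeasurable_id
    rw [hElaw 0] at h
    rw [← h]
    exact integral_id_expMeasure
  have hslln := strong_law_ae_real E hint hpind hident
  rw [hmean] at hslln
  have hsum := summable_levyTailInv_sq_arith Λ htail hmom (c := (1:ℝ)/2) (by norm_num)
  filter_upwards [hslln] with ω hω
  have h2 : Tendsto (fun n : ℕ => (∑ i ∈ Finset.range (n + 1), E i ω) / ((n:ℝ) + 1))
      atTop (𝓝 1) := by
    have h := hω.comp (tendsto_add_atTop_nat 1)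
    exact h.congr fun n => by simp [Function.comp_def]
  have h3 : ∀ᶠ n : ℕ in atTop,
      ((n:ℝ) + 1) * (1/2) ≤ ∑ i ∈ Finset.range (n + 1), E i ω := by
    filter_upwards [h2.eventually (eventually_ge_nhds (by norm_num : (1:ℝ)/2 < 1))] with n hn
    have hpos : (0:ℝ) < (n:ℝ) + 1 := by positivity
    rw [le_div_iff₀ hpos] at hn
    linarith
  obtain ⟨N, hN⟩ := eventually_atTop.mp h3
  rw [← summable_nat_add_iff N]
  apply Summable.of_nonneg_of_le (fun n => sq_nonneg _) ?_ ((summable_nat_add_iff N).mpr hsum)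
  intro n
  have hge := hN (n + N) (Nat.le_add_left N n)
  have hpos : (0:ℝ) < (((n + N : ℕ):ℝ) + 1) * (1/2) := by positivity
  have hle : levyTailInv Λ (∑ i ∈ Finset.range ((n + N) + 1), E i ω)
      ≤ levyTailInv Λ ((((n + N : ℕ):ℝ) + 1) * (1/2)) :=
    levyTailInv_le Λ htail hpos hge
  exact pow_le_pow_left₀ (levyTailInv_nonneg Λ _) hle 2
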